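/- Let y′ ∈ ℂ, let ψ̄ : ℤ → ℂ be a sequence satisfying y′·ψ̄_n = Σ_{j=−1}^{d1} β_j(n+j)·ψ̄_{n+j} for all n ≥ 0, and let φ̄_n : ℂ → ℂ (n ∈ ℤ) be differentiable functions satisfying φ̄_n′(x′) = Σ_{j=−1}^{d1} β_j(n)·φ̄_{n−j}(x′) for all n ≥ 0 and all x′ ∈ ℂ. Then for every N ≥ 1 and all x′ ∈ ℂ, with K(x′) := Σ_{n=0}^{N−1} ψ̄_n·φ̄_n(x′): y′·K(x′) − K′(x′) = −γ(N−1)·ψ̄_{N−1}·φ̄_N(x′) + Σ_{j=1}^{d1} Σ_{k=0}^{j−1} β_j(N+k)·ψ̄_{N+k}·φ̄_{N+k−j}(x′). (Generalized Christoffel–Darboux relation for the kernel K_{21}.) -/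
import Mathlib

open BigOperators

lemma icc_eq_ioc (a b : ℤ) : Finset.Icc a b = Finset.Ioc (a-1) b := by
  ext x; simp only [Finset.mem_Icc, Finset.mem_Ioc]; omega

lemma sum_split (f : ℤ → ℂ) (a b c : ℤ) (h1 : a ≤ b + 1) (h2 : b ≤ c) :
    ∑ m ∈ Finset.Icc a c, f m = ∑ m ∈ Finset.Icc a b, f m + ∑ m ∈ Finset.Icc (b+1) c, f m := by
  rw [icc_eq_ioc, icc_eq_ioc, icc_eq_ioc, show b + 1 - 1 = b by ring,
    ← Finset.Ioc_union_Ioc_eq_Ioc (a := a-1) (b := b) (c := c) (by omega) h2,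
    Finset.sum_union]
  rw [Finset.disjoint_left]
  intro x hx hx'
  simp only [Finset.mem_Ioc] at hx hx'
  omega

lemma sum_shift (f : ℤ → ℂ) (a b c : ℤ) :
    ∑ m ∈ Finset.Icc (a+c) (b+c), f m = ∑ n ∈ Finset.Icc a b, f (n + c) := by
  apply Finset.sum_bij' (fun m _ => m - c) (fun n _ => n + c) <;>
    intros <;> simp_all [Finset.mem_Icc] <;> omega

/-- Generalized Christoffel–Darboux relation for the kernel `K₂₁`. -/
theorem christoffel_darboux_K21
    (d1 d2 : ℕ) (hd1 : 1 ≤ d1) (hd2 : 1 ≤ d2)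
    (α β : ℤ → ℤ → ℂ) (γ : ℤ → ℂ)
    (hαsupp : ∀ j n : ℤ, (j < -1 ∨ (d2 : ℤ) < j) → α j n = 0)
    (hβsupp : ∀ j n : ℤ, (j < -1 ∨ (d1 : ℤ) < j) → β j n = 0)
    (hαγ : ∀ n : ℤ, α (-1) n = γ n)
    (hβγ : ∀ n : ℤ, β (-1) n = γ n)
    (hαsemi : ∀ j n : ℤ, n < j → α j n = 0)
    (hβsemi : ∀ j n : ℤ, n < j → β j n = 0)
    (hαneg : ∀ j n : ℤ, n < 0 → α j n = 0)
    (hβneg : ∀ j n : ℤ, n < 0 → β j n = 0)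
    (hγneg : ∀ n : ℤ, n < 0 → γ n = 0)
    (y' : ℂ) (ψb : ℤ → ℂ) (φb : ℤ → ℂ → ℂ)
    (hψb : ∀ n : ℤ, 0 ≤ n →
      y' * ψb n = ∑ j ∈ Finset.Icc (-1 : ℤ) (d1 : ℤ), β j (n + j) * ψb (n + j))
    (hφbdiff : ∀ n : ℤ, Differentiable ℂ (φb n))
    (hφb : ∀ n : ℤ, 0 ≤ n → ∀ x' : ℂ,
      deriv (φb n) x' = ∑ j ∈ Finset.Icc (-1 : ℤ) (d1 : ℤ), β j n * φb (n - j) x')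
    (N : ℤ) (hN : 1 ≤ N) (x' : ℂ) :
    y' * (∑ n ∈ Finset.Icc (0 : ℤ) (N - 1), ψb n * φb n x') -
        deriv (fun z => ∑ n ∈ Finset.Icc (0 : ℤ) (N - 1), ψb n * φb n z) x' =
      -(γ (N - 1) * ψb (N - 1) * φb N x') +
        ∑ j ∈ Finset.Icc (1 : ℤ) (d1 : ℤ), ∑ k ∈ Finset.Icc (0 : ℤ) (j - 1),
          β j (N + k) * ψb (N + k) * φb (N + k - j) x' := by
  set F : ℤ → ℤ → ℂ := fun j m => β j m * ψb m * φb (m - j) x' with hF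
  -- derivative of the finite sum
  have hderiv : deriv (fun z => ∑ n ∈ Finset.Icc (0:ℤ) (N-1), ψb n * φb n z) x'
      = ∑ n ∈ Finset.Icc (0:ℤ) (N-1), ψb n * deriv (φb n) x' := by
    rw [deriv_fun_sum (fun n _ => ((hφbdiff n).differentiableAt).const_mul (ψb n))]
    exact Finset.sum_congr rfl fun n _ => deriv_const_mul (ψb n) ((hφbdiff n).differentiableAt)
  rw [hderiv, Finset.mul_sum, ← Finset.sum_sub_distrib]
  have hstep : ∀ n ∈ Finset.Icc (0:ℤ) (N-1),
      y' * (ψb n * φb n x') - ψb n * deriv (φb n) x'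
        = ∑ j ∈ Finset.Icc (-1:ℤ) (d1:ℤ), (F (j) (n+j) - F j n) := by
    intro n hn
    simp only [Finset.mem_Icc] at hn
    rw [← mul_assoc, hψb n hn.1, hφb n hn.1 x', Finset.sum_mul, Finset.mul_sum,
      ← Finset.sum_sub_distrib]
    refine Finset.sum_congr rfl fun j hj => ?_
    simp only [hF]
    rw [show n + j - j = n by ring]
    ring
  rw [Finset.sum_congr rfl hstep, Finset.sum_comm]
  -- common extension lemma: sum of F j over Icc 0 (N-1) equals sum over Icc (-1) (N-1)
  have hext : ∀ j : ℤ, ∑ m ∈ Finset.Icc (0:ℤ) (N-1), F j m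
      = ∑ m ∈ Finset.Icc (-1:ℤ) (N-1), F j m := by
    intro j
    rw [sum_split (F j) (-1) (-1) (N-1) (by omega) (by omega)]
    simp only [Finset.Icc_self, Finset.sum_singleton]
    rw [show (-1:ℤ) + 1 = 0 by ring, hF]
    simp [hβneg j (-1) (by omega)]
  -- the j ≥ 0 case
  have key : ∀ j ∈ Finset.Icc (0:ℤ) (d1:ℤ),
      ∑ n ∈ Finset.Icc (0:ℤ) (N-1), (F j (n+j) - F j n)
        = ∑ k ∈ Finset.Icc (0:ℤ) (j-1), F j (N+k) := by
    intro j hj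
    simp only [Finset.mem_Icc] at hj
    rw [Finset.sum_sub_distrib]
    have h1 : ∑ n ∈ Finset.Icc (0:ℤ) (N-1), F j (n+j)
        = ∑ m ∈ Finset.Icc (-1:ℤ) (N-1+j), F j m := by
      rw [← sum_shift (F j) 0 (N-1) j, zero_add,
        sum_split (F j) (-1) (j-1) (N-1+j) (by omega) (by omega),
        show j - 1 + 1 = j by ring]
      have : ∑ m ∈ Finset.Icc (-1:ℤ) (j-1), F j m = 0 := by
        apply Finset.sum_eq_zero
        intro m hm
        simp only [Finset.mem_Icc] at hm
        simp [hF, hβsemi j m (by omega)]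
      rw [this, zero_add]
    rw [h1, hext j,
      sum_split (F j) (-1) (N-1) (N-1+j) (by omega) (by omega),
      show N - 1 + 1 = N by ring, add_sub_cancel_left,
      show Finset.Icc N (N-1+j) = Finset.Icc (0+N) ((j-1)+N) by congr 1 <;> ring,
      sum_shift (F j) 0 (j-1) N]
    exact Finset.sum_congr rfl fun k _ => by rw [add_comm k N]
  -- the j = -1 case (telescoping boundary term)
  have keyneg : ∑ n ∈ Finset.Icc (0:ℤ) (N-1), (F (-1) (n + (-1)) - F (-1) n)
      = -(γ (N - 1) * ψb (N - 1) * φb N x') := by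
    rw [Finset.sum_sub_distrib, ← sum_shift (F (-1)) 0 (N-1) (-1),
      show (0:ℤ) + (-1) = -1 by ring, show N - 1 + (-1) = N - 2 by ring, hext (-1),
      sum_split (F (-1)) (-1) (N-2) (N-1) (by omega) (by omega),
      show N - 2 + 1 = N - 1 by ring]
    simp only [Finset.Icc_self, Finset.sum_singleton]
    rw [hF]
    simp only
    rw [hβγ, show N - 1 - (-1) = N by ring]
    ring
  -- assemble
  rw [sum_split _ (-1) (-1) (d1:ℤ) (by omega) (by omega),
    show (-1:ℤ) + 1 = 0 by ring]
  simp only [Finset.Icc_self, Finset.sum_singleton]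
  rw [keyneg, Finset.sum_congr rfl key,
    sum_split _ 0 0 (d1:ℤ) (by omega) (by omega), zero_add]
  simp only [Finset.Icc_self, Finset.sum_singleton]
  rw [show Finset.Icc (0:ℤ) (0-1) = ∅ by rfl, Finset.sum_empty, zero_add]
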